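/- For every pair of multi-indices β, γ ∈ ℕ^d: Y^β · Y^γ = (Ψ_β Φ_βᵀ Ψ_γ) · Φ_γᵀ. In particular, the pair of matrices (Ψ_β Φ_βᵀ Ψ_γ, Φ_γ) is a node factorization of the single head Y^β Y^γ of the 2-FWL update step, so each head of the 2-FWL update applied to a node-factorized tensor is again node-factorized by explicit polynomial feature maps. -/

import Mathlib

open scoped BigOperators Matrix

/-- Multi-indices `ν ∈ ℕ^D` with `∑ₖ νₖ = n`. -/
def ExactIdx (D n : ℕ) : Type := {ν : Fin D → ℕ // ∑ k, ν k = n}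

noncomputable instance (D n : ℕ) : Fintype (ExactIdx D n) :=
  Fintype.ofInjective
    (fun ν : ExactIdx D n => fun k => (⟨ν.1 k, by
      have h1 : ν.1 k ≤ ∑ j, ν.1 j :=
        Finset.single_le_sum (fun _ _ => Nat.zero_le _) (Finset.mem_univ k)
      have h2 := ν.2
      omega⟩ : Fin (n + 1)))
    (fun ν₁ ν₂ h => Subtype.ext (funext fun k => congrArg Fin.val (congrFun h k)))

/-- The entrywise multi-power `Y^β` of the tensor `Y`. -/
noncomputable def Ypow {n d : ℕ} (β : Fin d → ℕ) (Y : Fin n → Fin n → Fin d → ℝ) :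
    Matrix (Fin n) (Fin n) ℝ :=
  Matrix.of fun i j => ∏ l, (Y i j l) ^ (β l)

/-- The polynomial-kernel feature map matrix
`(Ψ_β)_{i,ν} = ∏ₗ √(βₗ!/∏ₖ ν_{l,k}!) ∏ₖ (w_i^l)ₖ^{ν_{l,k}}`. -/
noncomputable def featMap {n d : ℕ} (D : Fin d → ℕ) (β : Fin d → ℕ)
    (w : Fin n → ∀ l : Fin d, Fin (D l) → ℝ) :
    Matrix (Fin n) (∀ l : Fin d, ExactIdx (D l) (β l)) ℝ :=
  Matrix.of fun i ν =>
    ∏ l, (Real.sqrt (((β l).factorial : ℝ) / ∏ k, (((ν l).1 k).factorial : ℝ)) *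
      ∏ k, (w i l k) ^ ((ν l).1 k))


lemma sum_exactIdx {M : Type*} [AddCommMonoid M] {Dl m : ℕ} (f : (Fin Dl → ℕ) → M) :
    ∑ ν : ExactIdx Dl m, f ν.1 = ∑ k ∈ Finset.piAntidiag Finset.univ m, f k := by
  letI : Fintype {ν : Fin Dl → ℕ // ∑ k, ν k = m} := show Fintype (ExactIdx Dl m) from inferInstance
  exact (Finset.sum_subtype _ (fun x => by simp [Finset.mem_piAntidiag]) f).symm

set_option maxHeartbeats 1000000 in
lemma kernel_eq {n d : ℕ} (D : Fin d → ℕ) (β : Fin d → ℕ)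
    (s t : Fin n → ∀ l : Fin d, Fin (D l) → ℝ) :
    featMap D β s * (featMap D β t)ᵀ
      = Ypow β (fun i j l => ∑ k, s i l k * t j l k) := by
  ext i j
  rw [Matrix.mul_apply]
  simp only [featMap, Ypow, Matrix.transpose_apply, Matrix.of_apply]
  have key : ∀ l : Fin d, (∑ k, s i l k * t j l k) ^ β l
      = ∑ ν : ExactIdx (D l) (β l),
          (((β l).factorial : ℝ) / ∏ k, ((ν.1 k).factorial : ℝ)) *
            ∏ k, (s i l k * t j l k) ^ ν.1 k := by
    intro l
    rw [Finset.sum_pow_eq_sum_piAntidiag Finset.univ (fun k => s i l k * t j l k) (β l),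
      sum_exactIdx (fun ν => (((β l).factorial : ℝ) / ∏ k, ((ν k).factorial : ℝ)) *
        ∏ k, (s i l k * t j l k) ^ ν k)]
    refine Finset.sum_congr rfl fun ν hν => ?_
    rw [Finset.mem_piAntidiag] at hν
    congr 1
    have hspec := Nat.multinomial_spec Finset.univ ν
    rw [hν.1] at hspec
    have hprodne : (∏ k, ((ν k).factorial : ℝ)) ≠ 0 := by positivity
    rw [eq_div_iff hprodne]
    push_cast [← hspec]
    ring
  calc ∑ ν : ∀ l, ExactIdx (D l) (β l),
        (∏ l, (Real.sqrt (((β l).factorial : ℝ) / ∏ k, (((ν l).1 k).factorial : ℝ)) *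
          ∏ k, s i l k ^ (ν l).1 k)) *
        ∏ l, (Real.sqrt (((β l).factorial : ℝ) / ∏ k, (((ν l).1 k).factorial : ℝ)) *
          ∏ k, t j l k ^ (ν l).1 k)
      = ∑ ν : ∀ l, ExactIdx (D l) (β l),
          ∏ l, ((((β l).factorial : ℝ) / ∏ k, (((ν l).1 k).factorial : ℝ)) *
            ∏ k, (s i l k * t j l k) ^ (ν l).1 k) := by
        refine Finset.sum_congr rfl fun ν _ => ?_
        rw [← Finset.prod_mul_distrib]
        refine Finset.prod_congr rfl fun l _ => ?_
        have hnn : (0:ℝ) ≤ ((β l).factorial : ℝ) / ∏ k, (((ν l).1 k).factorial : ℝ) := by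
          positivity
        rw [mul_mul_mul_comm, Real.mul_self_sqrt hnn, ← Finset.prod_mul_distrib]
        simp [mul_pow]
    _ = ∏ l, ∑ ν : ExactIdx (D l) (β l),
          ((((β l).factorial : ℝ) / ∏ k, ((ν.1 k).factorial : ℝ)) *
            ∏ k, (s i l k * t j l k) ^ ν.1 k) :=
        (Fintype.prod_sum (fun l (ν : ExactIdx (D l) (β l)) =>
          (((β l).factorial : ℝ) / ∏ k, ((ν.1 k).factorial : ℝ)) *
            ∏ k, (s i l k * t j l k) ^ ν.1 k)).symm
    _ = ∏ l, (∑ k, s i l k * t j l k) ^ β l :=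
        Finset.prod_congr rfl fun l _ => (key l).symm

/-- `Y^β Y^γ = (Ψ_β Φ_βᵀ Ψ_γ) Φ_γᵀ`: each head of the 2-FWL update step applied to a
node-factorized tensor is again node-factorized by explicit polynomial feature maps. -/
theorem fwl_head_factorization (n d : ℕ) (hn : 1 ≤ n) (D : Fin d → ℕ)
    (β γ : Fin d → ℕ) (s t : Fin n → ∀ l : Fin d, Fin (D l) → ℝ) :
    Ypow β (fun i j l => ∑ k, s i l k * t j l k) *
        Ypow γ (fun i j l => ∑ k, s i l k * t j l k)
      = (featMap D β s * (featMap D β t)ᵀ * featMap D γ s) * (featMap D γ t)ᵀ := by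
  rw [← kernel_eq D β s t, ← kernel_eq D γ s t]
  simp only [Matrix.mul_assoc]
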